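/- Let 2 ≤ p < p0 ≤ ∞ and n ≤ m. Then the Weyl numbers of id : ℓ_{p0}^m → ℓ_p^m satisfy x_n(id) ≲ (m/n)^{1/r} where 1/r = (1/p − 1/p0)/(1 − 2/p0), with the implicit constant independent of n and m. -/

import Mathlib

set_option maxHeartbeats 1000000

open scoped NNReal
open Finset


open scoped ENNReal

instance : Fact ((1 : ℝ≥0∞) ≤ 2) := ⟨one_le_two⟩

/-- The sequence space `ℓ₂` of square-summable complex sequences. -/
noncomputable abbrev ellTwo : Type := lp (fun _ : ℕ => ℂ) 2

/-- The `ℓ_p` (quasi-)norm on `ℂ^m`, `0 < p < ∞`. -/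
noncomputable def lpNorm (p : ℝ) {m : ℕ} (x : Fin m → ℂ) : ℝ≥0∞ :=
  (∑ i, (‖x i‖₊ : ℝ≥0∞) ^ p) ^ (1 / p)

/-- The `ℓ_p` norm on `ℂ^m` for `p ∈ (0,∞]`, with the `sup`-norm for `p = ∞`. -/
noncomputable def lpNormE (p : ℝ≥0∞) {m : ℕ} (x : Fin m → ℂ) : ℝ≥0∞ :=
  if p = ∞ then ⨆ i, (‖x i‖₊ : ℝ≥0∞) else (∑ i, (‖x i‖₊ : ℝ≥0∞) ^ p.toReal) ^ (1 / p.toReal)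

/-- The `n`-th Weyl number of the identity between two quasi-normed structures. -/
noncomputable def genWeylNum (W : Type*) [AddCommGroup W] [Module ℂ W]
    (N₁ N₂ : W → ℝ≥0∞) (n : ℕ) : ℝ≥0∞ :=
  ⨆ A : {A : ellTwo →ₗ[ℂ] W // ∀ u, N₁ (A u) ≤ ENNReal.ofReal ‖u‖},
    ⨅ F : {F : ellTwo →ₗ[ℂ] W // Module.rank ℂ (LinearMap.range F) < (n : Cardinal)},
      ⨆ u : {u : ellTwo // ‖u‖ ≤ 1}, N₂ (A.1 u.1 - F.1 u.1)

lemma trace_step (m : ℕ) (b : OrthonormalBasis (Fin m) ℂ (EuclideanSpace ℂ (Fin m)))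
    (v : Fin m → ellTwo) (hv1 : ∀ i, ‖v i‖ ≤ 1)
    (B : EuclideanSpace ℂ (Fin m) →ₗ[ℂ] EuclideanSpace ℂ (Fin m))
    (hBapply : ∀ y i, B y i = ∑ j, y j * ((inner ℂ (v i) (v j)) : ℂ))
    (lam : Fin m → ℝ)
    (hlamB : ∀ k, ((lam k : ℂ)) = inner ℂ (b k) (B (b k))) :
    ∑ k, lam k ≤ (m : ℝ) := by
  classical
  have hunit : ∀ i j, ∑ k, (b k j) * (starRingEnd ℂ) (b k i) = if j = i then (1:ℂ) else 0 := by
    intro i j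
    have h := b.sum_inner_mul_inner (EuclideanSpace.single j (1:ℂ)) (EuclideanSpace.single i (1:ℂ))
    simp only [EuclideanSpace.inner_single_left, EuclideanSpace.inner_single_right, map_one,
      one_mul, mul_one] at h
    rw [h, EuclideanSpace.single_apply]
    simp [eq_comm]
  have hC : ∑ k, ((lam k : ℂ)) = ∑ i, (inner ℂ (v i) (v i) : ℂ) := by
    calc ∑ k, ((lam k : ℂ)) = ∑ k, (inner ℂ (b k) (B (b k)) : ℂ) :=
          Finset.sum_congr rfl (fun k _ => hlamB k)
      _ = ∑ k, ∑ i, (starRingEnd ℂ) (b k i) * (B (b k) i) := by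
          refine Finset.sum_congr rfl (fun k _ => ?_)
          rw [PiLp.inner_apply]
          simp only [RCLike.inner_apply']
      _ = ∑ k, ∑ i, ∑ j, (inner ℂ (v i) (v j) : ℂ) * ((b k j) * (starRingEnd ℂ) (b k i)) := by
          refine Finset.sum_congr rfl (fun k _ => Finset.sum_congr rfl (fun i _ => ?_))
          rw [hBapply, Finset.mul_sum]
          refine Finset.sum_congr rfl (fun j _ => by ring)
      _ = ∑ i, ∑ j, (inner ℂ (v i) (v j) : ℂ) * ∑ k, ((b k j) * (starRingEnd ℂ) (b k i)) := by
          rw [Finset.sum_comm]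
          refine Finset.sum_congr rfl (fun i _ => ?_)
          rw [Finset.sum_comm]
          refine Finset.sum_congr rfl (fun j _ => ?_)
          rw [Finset.mul_sum]
      _ = ∑ i, (inner ℂ (v i) (v i) : ℂ) := by
          refine Finset.sum_congr rfl (fun i _ => ?_)
          rw [Finset.sum_eq_single i]
          · rw [hunit]; simp
          · intro j _ hj
            rw [hunit]
            simp [hj]
          · simp
  have hR : ∑ k, lam k = ∑ i, ‖v i‖ ^ 2 := by
    have : ((∑ k, lam k : ℝ) : ℂ) = ((∑ i, ‖v i‖ ^ 2 : ℝ) : ℂ) := by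
      push_cast
      rw [hC]
      refine Finset.sum_congr rfl (fun i _ => ?_)
      rw [inner_self_eq_norm_sq_to_K]
      norm_cast
    exact_mod_cast this
  rw [hR]
  calc ∑ i, ‖v i‖ ^ 2 ≤ ∑ _i : Fin m, (1:ℝ) :=
        Finset.sum_le_sum (fun i _ => pow_le_one₀ (norm_nonneg _) (hv1 i))
    _ = m := by simp


lemma bessel_step (m : ℕ) (ak : Fin m → ellTwo) (lam : Fin m → ℝ) (R : ℝ) (hR : 0 ≤ R)
    (hpair : ∀ k j, (inner ℂ (ak k) (ak j) : ℂ) = if k = j then ((lam j : ℝ) : ℂ) else 0)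
    (hlam_eq : ∀ k, lam k = ‖ak k‖ ^ 2)
    (K : Finset (Fin m)) (hKlam : ∀ k, k ∉ K → lam k ≤ R)
    (w : ellTwo) (hperp : ∀ k ∈ K, (inner ℂ (ak k) w : ℂ) = 0) :
    ∑ k, ‖(inner ℂ (ak k) w : ℂ)‖ ^ 2 ≤ R * ‖w‖ ^ 2 := by
  classical
  set g : Fin m → ellTwo := fun k => ((‖ak k‖⁻¹ : ℝ) : ℂ) • ak k with hg
  set p : Fin m → Prop := fun k => lam k ≠ 0 ∧ k ∉ K with hp
  have hak_ne : ∀ k, p k → ‖ak k‖ ≠ 0 := by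
    intro k hk h0
    exact hk.1 (by rw [hlam_eq, h0]; ring)
  have hinner : ∀ k j, (inner ℂ (g k) (g j) : ℂ) =
      ((‖ak k‖⁻¹ * ‖ak j‖⁻¹ : ℝ) : ℂ) * inner ℂ (ak k) (ak j) := by
    intro k j
    rw [hg]
    simp only [inner_smul_left, inner_smul_right, Complex.conj_ofReal]
    push_cast
    ring
  have hON : Orthonormal ℂ (fun k : Subtype p => g k.1) := by
    rw [orthonormal_iff_ite]
    intro k j
    by_cases hkj : k = j
    · subst hkj
      rw [if_pos rfl, hinner, hpair, if_pos rfl]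
      have h1 : (‖ak k.1‖⁻¹ * ‖ak k.1‖⁻¹ * lam k.1 : ℝ) = 1 := by
        rw [hlam_eq]
        field_simp [hak_ne k.1 k.2]
      exact_mod_cast h1
    · have hkj' : k.1 ≠ j.1 := fun h => hkj (Subtype.ext h)
      rw [if_neg hkj, hinner, hpair, if_neg hkj', mul_zero]
  have hBessel : ∑ k : Subtype p, ‖(inner ℂ (g k.1) w : ℂ)‖ ^ 2 ≤ ‖w‖ ^ 2 :=
    Orthonormal.sum_inner_products_le w hON
  have hterm : ∀ k, ‖(inner ℂ (ak k) w : ℂ)‖ ^ 2 ≤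
      if p k then R * ‖(inner ℂ (g k) w : ℂ)‖ ^ 2 else 0 := by
    intro k
    by_cases hk : p k
    · rw [if_pos hk]
      have hak : ‖ak k‖ ≠ 0 := hak_ne k hk
      have hrw : ak k = ((‖ak k‖ : ℝ) : ℂ) • g k := by
        rw [hg]
        simp only [smul_smul]
        rw [← Complex.ofReal_mul, mul_inv_cancel₀ hak]
        simp
      calc ‖(inner ℂ (ak k) w : ℂ)‖ ^ 2 = ‖ak k‖^2 * ‖(inner ℂ (g k) w : ℂ)‖ ^ 2 := by
            nth_rewrite 1 [hrw]
            rw [inner_smul_left, Complex.conj_ofReal, norm_mul, Complex.norm_real,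
              Real.norm_eq_abs, abs_of_nonneg (norm_nonneg (ak k)), mul_pow]
        _ ≤ R * ‖(inner ℂ (g k) w : ℂ)‖ ^ 2 := by
            apply mul_le_mul_of_nonneg_right _ (by positivity)
            rw [← hlam_eq]
            exact hKlam k hk.2
    · rw [if_neg hk]
      by_cases hkK : k ∈ K
      · rw [hperp k hkK]; simp
      · have h0 : lam k = 0 := by
          by_contra h1
          exact hk ⟨h1, hkK⟩
        have hz : ak k = 0 := by
          have h1 := hlam_eq k
          rw [h0] at h1
          have h2 : ‖ak k‖ = 0 := by nlinarith [norm_nonneg (ak k)]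
          exact norm_eq_zero.mp h2
        rw [hz]
        simp
  calc ∑ k, ‖(inner ℂ (ak k) w : ℂ)‖ ^ 2
      ≤ ∑ k, (if p k then R * ‖(inner ℂ (g k) w : ℂ)‖ ^ 2 else 0) :=
        Finset.sum_le_sum (fun k _ => hterm k)
    _ = ∑ k ∈ univ.filter p, R * ‖(inner ℂ (g k) w : ℂ)‖ ^ 2 := by
        rw [Finset.sum_filter]
    _ = R * ∑ k ∈ univ.filter p, ‖(inner ℂ (g k) w : ℂ)‖ ^ 2 := by
        rw [Finset.mul_sum]
    _ = R * ∑ k : Subtype p, ‖(inner ℂ (g k.1) w : ℂ)‖ ^ 2 := by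
        congr 1
        exact Finset.sum_subtype (univ.filter p) (fun x => by simp; exact Iff.rfl)
          (fun k => ‖(inner ℂ (g k) w : ℂ)‖ ^ 2)
    _ ≤ R * ‖w‖ ^ 2 := mul_le_mul_of_nonneg_left hBessel hR


lemma exists_good_approx (m n : ℕ) (hn : 1 ≤ n) (hnm : n ≤ m)
    (A : ellTwo →ₗ[ℂ] (Fin m → ℂ)) (hA : ∀ u i, ‖A u i‖ ≤ ‖u‖) :
    ∃ F : ellTwo →ₗ[ℂ] (Fin m → ℂ), Module.rank ℂ (LinearMap.range F) < (n : Cardinal) ∧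
      ∀ u : ellTwo, ∃ w : ellTwo, A u - F u = A w ∧ ‖w‖ ≤ ‖u‖ ∧
        ∑ i, ‖A w i‖ ^ 2 ≤ ((m : ℝ) / n) * ‖u‖ ^ 2 := by
  classical
  have hφc : ∀ i : Fin m, ∃ v : ellTwo, ‖v‖ ≤ 1 ∧ ∀ u, (inner ℂ v u : ℂ) = A u i := by
    intro i
    set ℓ : ellTwo →ₗ[ℂ] ℂ := (LinearMap.proj i) ∘ₗ A with hℓ
    have hb : ∀ u, ‖ℓ u‖ ≤ 1 * ‖u‖ := fun u => by simpa [hℓ] using hA u i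
    set φ : ellTwo →L[ℂ] ℂ := LinearMap.mkContinuous ℓ 1 hb with hφ
    refine ⟨(InnerProductSpace.toDual ℂ ellTwo).symm φ, ?_, fun u => ?_⟩
    · rw [LinearIsometryEquiv.norm_map]
      exact LinearMap.mkContinuous_norm_le ℓ zero_le_one hb
    · rw [InnerProductSpace.toDual_symm_apply]; rfl
  choose v hv1 hvA using hφc
  set Aadj : EuclideanSpace ℂ (Fin m) →ₗ[ℂ] ellTwo :=
    { toFun := fun y => ∑ i, y i • v i
      map_add' := by
        intro y z
        simp [PiLp.add_apply, add_smul, Finset.sum_add_distrib]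
      map_smul' := by
        intro c y
        simp [PiLp.smul_apply, smul_smul, Finset.smul_sum] } with hAadj
  set mapA : ellTwo →ₗ[ℂ] EuclideanSpace ℂ (Fin m) :=
    { toFun := fun u => (WithLp.equiv 2 (Fin m → ℂ)).symm (fun i => (inner ℂ (v i) u : ℂ))
      map_add' := by
        intro y z
        ext i
        simp [inner_add_right]
      map_smul' := by
        intro c y
        ext i
        simp [inner_smul_right] } with hmapA
  have hmapA_apply : ∀ u i, mapA u i = (inner ℂ (v i) u : ℂ) := fun u i => rfl
  have hmapA_A : ∀ u i, mapA u i = A u i := fun u i => by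
    rw [hmapA_apply, hvA]
  have hadj : ∀ (y : EuclideanSpace ℂ (Fin m)) (u : ellTwo),
      (inner ℂ (Aadj y) u : ℂ) = (inner ℂ y (mapA u) : ℂ) := by
    intro y u
    rw [hAadj]
    simp only [LinearMap.coe_mk, AddHom.coe_mk]
    rw [sum_inner, PiLp.inner_apply]
    congr 1
    ext i
    rw [inner_smul_left, hmapA_apply]
    rw [RCLike.inner_apply']
  set B : EuclideanSpace ℂ (Fin m) →ₗ[ℂ] EuclideanSpace ℂ (Fin m) := mapA ∘ₗ Aadj with hB
  have hBinner : ∀ x y, (inner ℂ x (B y) : ℂ) = inner ℂ (Aadj x) (Aadj y) := by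
    intro x y
    rw [hB, LinearMap.comp_apply, ← hadj]
  have hBsym : B.IsSymmetric := by
    intro x y
    rw [hBinner, ← inner_conj_symm, hBinner, ← inner_conj_symm (Aadj x)]
  let b := hBsym.eigenvectorBasis (finrank_euclideanSpace_fin)
  let lam := hBsym.eigenvalues (finrank_euclideanSpace_fin)
  have heig : ∀ k, B (b k) = (lam k : ℂ) • b k := fun k =>
    hBsym.apply_eigenvectorBasis _ k
  have hpair : ∀ k j, (inner ℂ (Aadj (b k)) (Aadj (b j)) : ℂ)
      = (lam j : ℂ) * inner ℂ (b k) (b j) := by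
    intro k j
    rw [← hBinner, heig, inner_smul_right]
  have hbkk : ∀ k, (inner ℂ (b k) (b k) : ℂ) = 1 := by
    intro k
    rw [inner_self_eq_norm_sq_to_K]
    simp [b.orthonormal.1 k]
  have hlam_eq : ∀ k, (lam k : ℝ) = ‖Aadj (b k)‖ ^ 2 := by
    intro k
    have h1 := hpair k k
    rw [inner_self_eq_norm_sq_to_K, hbkk, mul_one] at h1
    rw [← RCLike.ofReal_pow] at h1
    exact RCLike.ofReal_inj.mp h1.symm
  have hlam_nonneg : ∀ k, 0 ≤ lam k := fun k => (hlam_eq k).symm ▸ sq_nonneg _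
  -- trace bound
  have hBapply : ∀ y i, B y i = ∑ j, y j * ((inner ℂ (v i) (v j)) : ℂ) := by
    intro y i
    have h0 : B y i = (inner ℂ (v i) (Aadj y) : ℂ) := by
      rw [hB, LinearMap.comp_apply, hmapA_apply]
    rw [h0, hAadj]
    simp only [LinearMap.coe_mk, AddHom.coe_mk]
    rw [inner_sum]
    exact Finset.sum_congr rfl (fun j _ => by rw [inner_smul_right])
  have hlamB : ∀ k, ((lam k : ℂ)) = inner ℂ (b k) (B (b k)) := by
    intro k
    rw [hBinner, hpair, hbkk, mul_one]
  have htrace : ∑ k, lam k ≤ (m : ℝ) :=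
    trace_step m b v hv1 B hBapply lam hlamB
  -- the heavy-eigenvalue set
  have hn' : (0:ℝ) < n := by exact_mod_cast hn
  have hmn1 : (1:ℝ) ≤ (m : ℝ) / n := by
    rw [le_div_iff₀ hn']
    exact_mod_cast by simpa using hnm
  set K : Finset (Fin m) := univ.filter (fun k => (m:ℝ)/n < lam k) with hK
  have hKcard : K.card < n := by
    by_contra hcon
    push_neg at hcon
    have hKne : K.Nonempty := Finset.card_pos.mp (lt_of_lt_of_le hn hcon)
    have h1 : ∑ k ∈ K, ((m:ℝ)/n) < ∑ k ∈ K, lam k :=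
      Finset.sum_lt_sum_of_nonempty hKne (fun k hk => (Finset.mem_filter.mp hk).2)
    have h2 : ∑ k ∈ K, lam k ≤ ∑ k, lam k :=
      Finset.sum_le_sum_of_subset_of_nonneg (Finset.subset_univ K)
        (fun k _ _ => hlam_nonneg k)
    have h3 : (m:ℝ) ≤ ∑ k ∈ K, ((m:ℝ)/n) := by
      rw [Finset.sum_const, nsmul_eq_mul]
      calc (m:ℝ) = n * ((m:ℝ)/n) := by field_simp
      _ ≤ K.card * ((m:ℝ)/n) := by
          apply mul_le_mul_of_nonneg_right _ (by positivity)
          exact_mod_cast hcon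
    linarith [htrace]
  -- the subspace and projection
  set Sset : Set ellTwo := (fun k => Aadj (b k)) '' (K : Set (Fin m)) with hSset
  set S : Submodule ℂ ellTwo := Submodule.span ℂ Sset with hS
  haveI : FiniteDimensional ℂ S :=
    FiniteDimensional.span_of_finite ℂ ((K : Set (Fin m)).toFinite.image _)
  set F : ellTwo →ₗ[ℂ] (Fin m → ℂ) :=
    A ∘ₗ (S.subtype ∘ₗ (S.orthogonalProjection : ellTwo →L[ℂ] S).toLinearMap) with hF
  refine ⟨F, ?_, ?_⟩
  · -- rank bound
    have hrange : LinearMap.range F ≤ S.map A := by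
      rintro x ⟨u, rfl⟩
      exact ⟨(S.orthogonalProjection u : ellTwo), (S.orthogonalProjection u).2, rfl⟩
    calc Module.rank ℂ (LinearMap.range F) ≤ Module.rank ℂ (S.map A) :=
          Submodule.rank_mono hrange
      _ ≤ Module.rank ℂ S := rank_map_le A S
      _ ≤ Cardinal.mk Sset := rank_span_le Sset
      _ ≤ K.card := by
          rw [hSset]
          calc Cardinal.mk ((fun k => Aadj (b k)) '' (K : Set (Fin m)))
              ≤ Cardinal.mk (K : Set (Fin m)) := Cardinal.mk_image_le
            _ = K.card := Cardinal.mk_coe_finset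
      _ < n := by exact_mod_cast hKcard
  · -- per-vector bound
    intro u
    set w : ellTwo := u - (S.orthogonalProjection u : ellTwo) with hw
    have hwu : ‖w‖ ≤ ‖u‖ := by
      rw [hw]
      calc ‖u - (S.orthogonalProjection u : ellTwo)‖ = ⨅ x : S, ‖u - x‖ :=
            Submodule.starProjection_minimal u
        _ ≤ ‖u - ((0 : S) : ellTwo)‖ := by
            apply ciInf_le
            exact ⟨0, by rintro y ⟨x, rfl⟩; exact norm_nonneg _⟩
        _ = ‖u‖ := by simp
    refine ⟨w, by rw [hw, map_sub]; rfl, hwu, ?_⟩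
    have hw_orth : w ∈ Sᗮ := Submodule.sub_starProjection_mem_orthogonal u
    have hpair2 : ∀ k j, (inner ℂ (Aadj (b k)) (Aadj (b j)) : ℂ)
        = if k = j then ((lam j : ℝ) : ℂ) else 0 := by
      intro k j
      rw [hpair, orthonormal_iff_ite.mp b.orthonormal]
      by_cases hkj : k = j <;> simp [hkj]
    have hKlam : ∀ k, k ∉ K → lam k ≤ (m : ℝ) / n := by
      intro k hk
      rw [hK] at hk
      simp only [Finset.mem_filter, Finset.mem_univ, true_and] at hk
      linarith [hk]
    have hperpw : ∀ k ∈ K, (inner ℂ (Aadj (b k)) w : ℂ) = 0 := by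
      intro k hk
      refine (Submodule.mem_orthogonal S w).mp hw_orth _ ?_
      exact Submodule.subset_span ⟨k, hk, rfl⟩
    have hbess := bessel_step m (fun k => Aadj (b k)) lam ((m : ℝ) / n)
      (by positivity) hpair2 (fun k => hlam_eq k) K hKlam w hperpw
    have hsum_eq : ∑ i, ‖A w i‖ ^ 2 = ∑ k, ‖(inner ℂ (Aadj (b k)) w : ℂ)‖ ^ 2 := by
      have e1 : ∑ i, ‖A w i‖ ^ 2 = ‖mapA w‖ ^ 2 := by
        rw [EuclideanSpace.norm_eq, Real.sq_sqrt (by positivity)]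
        exact Finset.sum_congr rfl (fun i _ => by rw [hmapA_A])
      have e2 : ‖mapA w‖ ^ 2 = ∑ k, ‖b.repr (mapA w) k‖ ^ 2 := by
        rw [← b.repr.norm_map (mapA w), EuclideanSpace.norm_eq,
          Real.sq_sqrt (by positivity)]
      rw [e1, e2]
      refine Finset.sum_congr rfl (fun k _ => ?_)
      rw [b.repr_apply_apply, ← hadj]
    rw [hsum_eq]
    calc ∑ k, ‖(inner ℂ (Aadj (b k)) w : ℂ)‖ ^ 2 ≤ ((m : ℝ) / n) * ‖w‖ ^ 2 := hbess
      _ ≤ ((m : ℝ) / n) * ‖u‖ ^ 2 := by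
          apply mul_le_mul_of_nonneg_left _ (by positivity)
          exact pow_le_pow_left₀ (norm_nonneg _) hwu 2

lemma final_bound (p : ℝ) (p₀ : ℝ≥0∞) (hp : 2 ≤ p) (hpp₀ : ENNReal.ofReal p < p₀)
    {m : ℕ} (y : Fin m → ℂ) (R : ℝ) (hR : 1 ≤ R)
    (h2 : ∑ i, ‖y i‖ ^ 2 ≤ R)
    (hy : lpNormE p₀ y ≤ 1) :
    lpNorm p y ≤ ENNReal.ofReal (R ^ ((1/p - (p₀⁻¹).toReal)/(1 - 2*(p₀⁻¹).toReal))) := by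
  have hp0 : (0:ℝ) < p := lt_of_lt_of_le two_pos hp
  have hR0 : (0:ℝ) < R := lt_of_lt_of_le one_pos hR
  set a : ℝ := (p₀⁻¹).toReal with ha
  set Eexp : ℝ := (1/p - a)/(1 - 2*a) with hEexp
  have hsum : ∑ i, ‖y i‖ ^ p ≤ R ^ (p * Eexp) := by
    by_cases ht : p₀ = ∞
    · have ha0 : a = 0 := by rw [ha, ht]; simp
      have hpE : p * Eexp = 1 := by
        rw [hEexp, ha0]
        field_simp
        ring
      rw [hpE, Real.rpow_one]
      have hyle : ∀ i, ‖y i‖ ≤ 1 := by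
        intro i
        rw [lpNormE, if_pos ht] at hy
        have h1 : (‖y i‖₊ : ℝ≥0∞) ≤ 1 := le_trans (le_iSup (f := fun i : Fin m => (‖y i‖₊ : ℝ≥0∞)) i) hy
        have h2 : (‖y i‖₊ : ℝ≥0) ≤ 1 := by exact_mod_cast h1
        exact_mod_cast h2
      calc ∑ i, ‖y i‖ ^ p ≤ ∑ i, ‖y i‖ ^ (2:ℕ) := by
            refine Finset.sum_le_sum (fun i _ => ?_)
            rcases eq_or_lt_of_le (norm_nonneg (y i)) with h0 | h0
            · rw [← h0, Real.zero_rpow (by positivity)]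
              positivity
            · calc ‖y i‖ ^ p ≤ ‖y i‖ ^ (2:ℝ) :=
                    Real.rpow_le_rpow_of_exponent_ge h0 (hyle i) hp
                _ = ‖y i‖ ^ (2:ℕ) := Real.rpow_two _
        _ ≤ R := h2
    · have ht₀ : p < p₀.toReal := by
        have := (ENNReal.toReal_lt_toReal (by simp) ht).mpr hpp₀
        rwa [ENNReal.toReal_ofReal hp0.le] at this
      set t₀ : ℝ := p₀.toReal with ht₀def
      have ht₀2 : 2 < t₀ := lt_of_le_of_lt hp ht₀
      have hat : a = t₀⁻¹ := by rw [ha, ENNReal.toReal_inv]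
      have ht₀0 : (0:ℝ) < t₀ := by linarith
      have ht₀2' : (0:ℝ) < t₀ - 2 := by linarith
      have hyt : ∑ i, ‖y i‖ ^ t₀ ≤ 1 := by
        rw [lpNormE, if_neg ht] at hy
        have hconv : ∀ i : Fin m, (‖y i‖₊ : ℝ≥0∞) ^ t₀ = ENNReal.ofReal (‖y i‖ ^ t₀) := by
          intro i
          rw [← ENNReal.ofReal_coe_nnreal, coe_nnnorm, ENNReal.ofReal_rpow_of_nonneg (norm_nonneg _) ht₀0.le]
        rw [Finset.sum_congr rfl (fun i _ => hconv i),
          ← ENNReal.ofReal_sum_of_nonneg (fun i _ => by positivity),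
          ENNReal.ofReal_rpow_of_nonneg (by positivity) (by positivity)] at hy
        have h1 : (∑ i, ‖y i‖ ^ t₀) ^ (1/t₀) ≤ 1 := by
          rw [← ENNReal.ofReal_one] at hy
          exact (ENNReal.ofReal_le_ofReal_iff zero_le_one).mp hy
        have h2' : ((∑ i, ‖y i‖ ^ t₀) ^ (1/t₀)) ^ t₀ ≤ 1 :=
          Real.rpow_le_one (by positivity) h1 ht₀0.le
        rwa [← Real.rpow_mul (by positivity), one_div, inv_mul_cancel₀ ht₀0.ne',
          Real.rpow_one] at h2'
      by_cases hp2 : p = 2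
      · have hpE : p * Eexp = 1 := by
          rw [hEexp, hat, hp2]
          field_simp
        rw [hpE, Real.rpow_one, hp2]
        calc ∑ i, ‖y i‖ ^ (2:ℝ) = ∑ i, ‖y i‖ ^ (2:ℕ) :=
              Finset.sum_congr rfl (fun i _ => Real.rpow_two _)
          _ ≤ R := h2
      · have hp2' : 2 < p := lt_of_le_of_ne hp (Ne.symm hp2)
        set α : ℝ := (t₀ - p)/(t₀ - 2) with hα
        set β : ℝ := (p - 2)/(t₀ - 2) with hβ
        have hα0 : 0 < α := by rw [hα]; apply div_pos <;> linarith
        have hβ0 : 0 < β := by rw [hβ]; apply div_pos <;> linarith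
        have hαβ : α + β = 1 := by rw [hα, hβ]; field_simp; ring
        have hα1 : α < 1 := by linarith
        have hconj : (1/α).HolderConjugate (1/β) := by
          constructor
          · rw [one_div, one_div, inv_inv, inv_inv, inv_one]; exact hαβ
          · positivity
          · positivity
        have hHolder := Real.inner_le_Lp_mul_Lq_of_nonneg (Finset.univ (α := Fin m)) hconj
          (f := fun i => ‖y i‖ ^ ((2:ℝ) * α)) (g := fun i => ‖y i‖ ^ (t₀ * β))
          (fun i _ => by positivity) (fun i _ => by positivity)
        have hfg : ∀ i : Fin m, ‖y i‖ ^ ((2:ℝ) * α) * ‖y i‖ ^ (t₀ * β) = ‖y i‖ ^ p := by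
          intro i
          rw [← Real.rpow_add' (norm_nonneg _) (by intro h; nlinarith)]
          congr 1
          rw [hα, hβ]
          field_simp
          ring
        have hfP : ∀ i : Fin m, (‖y i‖ ^ ((2:ℝ) * α)) ^ (1/α) = ‖y i‖ ^ (2:ℕ) := by
          intro i
          rw [← Real.rpow_mul (norm_nonneg _)]
          rw [mul_one_div, mul_div_assoc, div_self hα0.ne', mul_one, Real.rpow_two]
        have hgQ : ∀ i : Fin m, (‖y i‖ ^ (t₀ * β)) ^ (1/β) = ‖y i‖ ^ t₀ := by
          intro i
          rw [← Real.rpow_mul (norm_nonneg _)]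
          rw [mul_one_div, mul_div_assoc, div_self hβ0.ne', mul_one]
        rw [Finset.sum_congr rfl (fun i _ => hfg i),
          Finset.sum_congr rfl (fun i _ => hfP i),
          Finset.sum_congr rfl (fun i _ => hgQ i)] at hHolder
        have hpE : p * Eexp = α := by
          rw [hEexp, hat, hα]
          field_simp
        rw [hpE]
        have hone : (1:ℝ)/(1/α) = α := by field_simp
        have hone' : (1:ℝ)/(1/β) = β := by field_simp
        rw [hone, hone'] at hHolder
        calc ∑ i, ‖y i‖ ^ p ≤ (∑ i, ‖y i‖ ^ (2:ℕ)) ^ α * (∑ i, ‖y i‖ ^ t₀) ^ β := hHolder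
          _ ≤ R ^ α * 1 := by
              apply mul_le_mul
              · exact Real.rpow_le_rpow (by positivity) h2 hα0.le
              · exact Real.rpow_le_one (by positivity) hyt hβ0.le
              · positivity
              · positivity
          _ = R ^ α := mul_one _
  -- convert to ENNReal
  have hconv : ∀ i : Fin m, (‖y i‖₊ : ℝ≥0∞) ^ p = ENNReal.ofReal (‖y i‖ ^ p) := by
    intro i
    rw [← ENNReal.ofReal_coe_nnreal, coe_nnnorm, ENNReal.ofReal_rpow_of_nonneg (norm_nonneg _) hp0.le]
  rw [lpNorm, Finset.sum_congr rfl (fun i _ => hconv i),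
    ← ENNReal.ofReal_sum_of_nonneg (fun i _ => by positivity),
    ENNReal.ofReal_rpow_of_nonneg (by positivity) (by positivity)]
  apply ENNReal.ofReal_le_ofReal
  calc (∑ i, ‖y i‖ ^ p) ^ (1/p) ≤ (R ^ (p * Eexp)) ^ (1/p) :=
        Real.rpow_le_rpow (by positivity) hsum (by positivity)
    _ = R ^ Eexp := by
        rw [← Real.rpow_mul hR0.le]
        congr 1
        field_simp

/-- For `2 ≤ p < p₀ ≤ ∞` and `n ≤ m`, the Weyl numbers of `id : ℓ_{p₀}^m → ℓ_p^m`
satisfy `x_n(id) ≲ (m/n)^{1/r}` with `1/r = (1/p - 1/p₀)/(1 - 2/p₀)`, the implicit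
constant independent of `n` and `m`. -/
theorem weyl_lp_id_upper (p : ℝ) (p₀ : ℝ≥0∞)
    (hp : 2 ≤ p) (hpp₀ : ENNReal.ofReal p < p₀) :
    ∃ c : ℝ, 0 < c ∧ ∀ m n : ℕ, 1 ≤ n → n ≤ m →
      genWeylNum (Fin m → ℂ) (lpNormE p₀) (lpNorm p) n ≤
        ENNReal.ofReal (c * ((m : ℝ) / (n : ℝ)) ^
          ((1 / p - (p₀⁻¹).toReal) / (1 - 2 * (p₀⁻¹).toReal))) := by
  refine ⟨1, one_pos, fun m n hn hnm => ?_⟩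
  have hp0 : (0:ℝ) < p := lt_of_lt_of_le two_pos hp
  have hn' : (0:ℝ) < n := by exact_mod_cast hn
  have hR : (1:ℝ) ≤ (m:ℝ)/n := by
    rw [le_div_iff₀ hn']
    rw [one_mul]
    exact_mod_cast hnm
  rw [genWeylNum]
  refine iSup_le ?_
  rintro ⟨A, hA⟩
  have hcoord : ∀ u i, ‖A u i‖ ≤ ‖u‖ := by
    intro u i
    have hle : (‖A u i‖₊ : ℝ≥0∞) ≤ lpNormE p₀ (A u) := by
      rw [lpNormE]
      split_ifs with hT
      · exact le_iSup (f := fun j : Fin m => (‖A u j‖₊ : ℝ≥0∞)) i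
      · have hp₀ne : p₀ ≠ 0 := by
          intro h0
          rw [h0] at hpp₀
          exact (not_lt_of_ge zero_le) hpp₀
        have ht₀0 : 0 < p₀.toReal := ENNReal.toReal_pos hp₀ne hT
        calc (‖A u i‖₊ : ℝ≥0∞) = ((‖A u i‖₊ : ℝ≥0∞) ^ p₀.toReal) ^ (1/p₀.toReal) := by
              rw [← ENNReal.rpow_mul, mul_one_div, div_self ht₀0.ne', ENNReal.rpow_one]
          _ ≤ (∑ j, (‖A u j‖₊ : ℝ≥0∞) ^ p₀.toReal) ^ (1/p₀.toReal) := by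
              apply ENNReal.rpow_le_rpow _ (by positivity)
              exact Finset.single_le_sum
                (f := fun j => (‖A u j‖₊ : ℝ≥0∞) ^ p₀.toReal)
                (fun j _ => zero_le) (Finset.mem_univ i)
    have h2 := le_trans hle (hA u)
    rw [← ENNReal.ofReal_coe_nnreal, coe_nnnorm] at h2
    exact (ENNReal.ofReal_le_ofReal_iff (norm_nonneg u)).mp h2
  obtain ⟨F, hFrank, hF⟩ := exists_good_approx m n hn hnm A hcoord
  refine iInf_le_of_le ⟨F, hFrank⟩ (iSup_le ?_)
  rintro ⟨u, hu⟩
  simp only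
  obtain ⟨w, hAw, hwu, hl2⟩ := hF u
  rw [hAw, one_mul]
  apply final_bound p p₀ hp hpp₀ (A w) ((m:ℝ)/n) hR
  · calc ∑ i, ‖A w i‖ ^ 2 ≤ ((m:ℝ)/n) * ‖u‖ ^ 2 := hl2
      _ ≤ ((m:ℝ)/n) * 1 := by
          apply mul_le_mul_of_nonneg_left _ (by positivity)
          nlinarith [norm_nonneg u]
      _ = (m:ℝ)/n := mul_one _
  · calc lpNormE p₀ (A w) ≤ ENNReal.ofReal ‖w‖ := hA w
      _ ≤ ENNReal.ofReal 1 := ENNReal.ofReal_le_ofReal (hwu.trans hu)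
      _ = 1 := ENNReal.ofReal_one
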